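/- arXiv:1806.02108 — 2 statements merged into one kernel-verified Lean document; each statement's English description precedes it below -/
import Mathlib

section
/- Let C be a k-linear Hom-finite triangulated category with split idempotents, t an n-cluster tilting object, T = add(t), Γ = End_C(t), F = Hom_C(t,−). For every morphism κ : k → a in C with k ∈ T * ΣT, there exists a factorization κ = ι ∘ σ through an object m ∈ T * ΣT such that Fσ is surjective and Fι is injective; consequently Fm ≅ Im(Fκ) in mod(Γ). -/
open CategoryTheory Category Limits Pretriangulated Opposite

universe v u

section Defs

variable {C : Type u} [Category.{v} C]

section Add

variable [Preadditive C] [HasFiniteBiproducts C]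

/-- `x` lies in `add t`: it is a direct summand of a finite direct sum of copies of `t`. -/
def inAdd (t x : C) : Prop :=
  ∃ (n : ℕ) (i : x ⟶ ⨁ (fun _ : Fin n => t)) (r : ⨁ (fun _ : Fin n => t) ⟶ x),
    i ≫ r = 𝟙 x

end Add

/-- A morphism lies in the radical of the category. -/
def radMor [Preadditive C] {x y : C} (f : x ⟶ y) : Prop :=
  ∀ g : y ⟶ x, IsIso (𝟙 x - f ≫ g)

/-- An object is indecomposable. -/
def IndecObj [Preadditive C] [HasBinaryBiproducts C] (s : C) : Prop :=
  ¬ IsZero s ∧ ∀ (a b : C), (s ≅ a ⊞ b) → IsZero a ∨ IsZero b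

/-- Every object has a precover by an object of `Tset` (contravariant finiteness). -/
def IsPrecovering (Tset : Set C) : Prop :=
  ∀ c : C, ∃ (x : C) (f : x ⟶ c), x ∈ Tset ∧
    ∀ x' ∈ Tset, ∀ g : x' ⟶ c, ∃ h : x' ⟶ x, h ≫ f = g

/-- Every object has a preenvelope by an object of `Tset` (covariant finiteness). -/
def IsPreenveloping (Tset : Set C) : Prop :=
  ∀ c : C, ∃ (x : C) (f : c ⟶ x), x ∈ Tset ∧
    ∀ x' ∈ Tset, ∀ g : c ⟶ x', ∃ h : x ⟶ x', f ≫ h = g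

/-- `f : x ⟶ c` is a `Tset`-cover: a right minimal `Tset`-approximation. -/
def IsTCover (Tset : Set C) {x c : C} (f : x ⟶ c) : Prop :=
  x ∈ Tset ∧ (∀ x' ∈ Tset, ∀ g : x' ⟶ c, ∃ h : x' ⟶ x, h ≫ f = g) ∧
    ∀ φ : x ⟶ x, φ ≫ f = f → IsIso φ

section Shift

variable [Preadditive C] [HasShift C ℤ]

/-- `Tset` is an `n`-cluster tilting subcategory: it is functorially finite and coincides with
both `Ext^{1..n-1}`-orthogonals of itself. -/
structure IsClusterTiltingSub (n : ℕ) (Tset : Set C) : Prop where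
  precovering : IsPrecovering Tset
  preenveloping : IsPreenveloping Tset
  mem_iff_ext₁ : ∀ c : C, c ∈ Tset ↔
    ∀ i : ℕ, 1 ≤ i → i ≤ n - 1 → ∀ x ∈ Tset, ∀ f : x ⟶ c⟦(i : ℤ)⟧, f = 0
  mem_iff_ext₂ : ∀ c : C, c ∈ Tset ↔
    ∀ i : ℕ, 1 ≤ i → i ≤ n - 1 → ∀ x ∈ Tset, ∀ f : c ⟶ x⟦(i : ℤ)⟧, f = 0

/-- `t` is an `n`-cluster tilting object: `add t` is an `n`-cluster tilting subcategory. -/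
def IsClusterTiltingObj [HasFiniteBiproducts C] (n : ℕ) (t : C) : Prop :=
  IsClusterTiltingSub n {x : C | inAdd t x}

end Shift

section Tri

variable [Preadditive C] [HasZeroObject C] [HasShift C ℤ]
  [∀ n : ℤ, (shiftFunctor C n).Additive] [Pretriangulated C]

/-- The Iyama–Yoshino star operation `X * Y` on full subcategories. -/
def star (X Y : Set C) : Set C :=
  {c | ∃ (x y : C) (f : x ⟶ c) (g : c ⟶ y) (h : y ⟶ x⟦(1 : ℤ)⟧),
    Triangle.mk f g h ∈ (distTriang C) ∧ x ∈ X ∧ y ∈ Y}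

/-- Iterated star operation `X₁ * X₂ * ⋯ * Xₘ`. -/
def starList : List (Set C) → Set C
  | [] => {c | IsZero c}
  | [X] => X
  | X :: Y :: L => star X (starList (Y :: L))

/-- A tower of triangles connecting the objects `cobj (m+1), cobj m, …, cobj 1, cobj 0`:
triangles `w (i+1) ⟶ cobj (i+1) ⟶ w i ⟶ (w (i+1))⟦1⟧` for `i < m`, with
`w 0 = cobj 0` and `w m = cobj (m+1)`. -/
structure TriTower (m : ℕ) (cobj : ℕ → C) where
  w : ℕ → C
  fmor : ∀ i : ℕ, w (i + 1) ⟶ cobj (i + 1)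
  gmor : ∀ i : ℕ, cobj (i + 1) ⟶ w i
  hmor : ∀ i : ℕ, w i ⟶ (w (i + 1))⟦(1 : ℤ)⟧
  mem : ∀ i < m, Triangle.mk (fmor i) (gmor i) (hmor i) ∈ distTriang C
  w_zero : w 0 = cobj 0
  w_top : w m = cobj (m + 1)

/-- The composite `w 0 ⟶ Σʲ (w j)` of the (suitably shifted) wavy morphisms of a tower. -/
noncomputable def towerComp {m : ℕ} {cobj : ℕ → C} (tw : TriTower m cobj) :
    ∀ j : ℕ, (tw.w 0 ⟶ (tw.w j)⟦(j : ℤ)⟧)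
  | 0 => (shiftFunctorZero' C ((0 : ℕ) : ℤ) (by simp)).inv.app (tw.w 0)
  | (j + 1) => towerComp tw j ≫ (shiftFunctor C (j : ℤ)).map (tw.hmor j) ≫
      (shiftFunctorAdd' C (1 : ℤ) (j : ℤ) ((j + 1 : ℕ) : ℤ) (by push_cast; ring)).inv.app
        (tw.w (j + 1))

/-- The full composite `cobj 0 ⟶ Σᵐ (cobj (m+1))` of the wavy morphisms of a tower. -/
noncomputable def towerGamma {m : ℕ} {cobj : ℕ → C} (tw : TriTower m cobj) :
    cobj 0 ⟶ (cobj (m + 1))⟦(m : ℤ)⟧ :=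
  eqToHom tw.w_zero.symm ≫ towerComp tw m ≫ eqToHom (by rw [tw.w_top])

/-- `cls` is constant on isomorphism classes of objects of `Tset` and additive on biproducts
of objects of `Tset`; quantifying over all such `cls` encodes identities in the split
Grothendieck group `K₀^{sp}(Tset)`. -/
def IsAddOn [HasFiniteBiproducts C] (Tset : Set C) {G : Type*} [AddCommGroup G]
    (cls : C → G) : Prop :=
  (∀ x y : C, x ∈ Tset → y ∈ Tset → Nonempty (x ≅ y) → cls x = cls y) ∧
  (∀ x y : C, x ∈ Tset → y ∈ Tset → cls (x ⊞ y) = cls x + cls y)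

/-- `ind` is the triangulated index with respect to `Tset`: for each `c` there is a tower of
triangles built from `Tset`-covers, and `ind c` is the alternating sum of the classes of its
`Tset`-objects. -/
def IsIndex [HasFiniteBiproducts C] (n : ℕ) (Tset : Set C) {G : Type*} [AddCommGroup G]
    (cls ind : C → G) : Prop :=
  ∀ c : C, ∃ (cobj : ℕ → C) (tw : TriTower (n - 1) cobj),
    cobj 0 = c ∧ (∀ i < n - 1, IsTCover Tset (tw.gmor i)) ∧ cobj n ∈ Tset ∧
    ind c = ∑ i ∈ Finset.range n, ((-1 : ℤ) ^ i) • cls (cobj (i + 1))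

/-- `ind` is the `(d+2)`-angulated index with respect to `Tset`: for each `s ∈ Sset` there is a
`(d+2)`-angle (encoded as a tower of triangles) `t_d → ⋯ → t_0 → s → Σ^d t_d` with `t_i ∈ Tset`
and radical maps, and `ind s` is the alternating sum of the classes of the `t_i`. -/
def IsHigherIndex [HasFiniteBiproducts C] (d : ℕ) (Tset Sset : Set C) {G : Type*}
    [AddCommGroup G] (cls ind : C → G) : Prop :=
  ∀ s ∈ Sset, ∃ (cobj : ℕ → C) (tw : TriTower d cobj),
    cobj 0 = s ∧ (∀ i, 1 ≤ i → i ≤ d + 1 → cobj i ∈ Tset) ∧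
    (∀ j : ℕ, j + 2 ≤ d → radMor (tw.gmor (j + 1) ≫ tw.fmor j)) ∧
    (∀ j : ℕ, (hj : j + 1 = d) →
      radMor ((eqToHom (show cobj (d + 1) = tw.w (j + 1) by rw [hj, tw.w_top]) :
        cobj (d + 1) ⟶ tw.w (j + 1)) ≫ tw.fmor j)) ∧
    ind s = ∑ i ∈ Finset.range (d + 1), ((-1 : ℤ) ^ i) • cls (cobj (i + 1))

/-- `t` is an Oppermann–Thomas cluster tilting object of the `(d+2)`-angulated category `Sset`:
`Hom(t, Σ^d t) = 0`, and every `s ∈ Sset` admits a `(d+2)`-angle (encoded as a tower)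
`t_d → ⋯ → t_0 → s → Σ^d t_d` with all `t_i ∈ add t`. -/
def IsOTClusterTilting [HasFiniteBiproducts C] (d : ℕ) (Sset : Set C) (t : C) : Prop :=
  t ∈ Sset ∧ (∀ f : t ⟶ t⟦(d : ℤ)⟧, f = 0) ∧
    ∀ s ∈ Sset, ∃ (cobj : ℕ → C) (tw : TriTower d cobj),
      cobj 0 = s ∧ ∀ i, 1 ≤ i → i ≤ d + 1 → inAdd t (cobj i)

/-- A `N`-Calabi–Yau structure on `Sset`: a bifunctorial perfect pairing
`Hom(x,y) × Hom(y, x⟦N⟧) → k`, encoding natural isomorphisms `Hom(x,y) ≅ D Hom(y, x⟦N⟧)`. -/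
structure CYData (k : Type*) [Field k] [Linear k C] (Sset : Set C) (N : ℤ) where
  pair : ∀ x y : C, (x ⟶ y) → (y ⟶ x⟦N⟧) → k
  add_left : ∀ x y, x ∈ Sset → y ∈ Sset → ∀ (f f' : x ⟶ y) (g : y ⟶ x⟦N⟧),
    pair x y (f + f') g = pair x y f g + pair x y f' g
  add_right : ∀ x y, x ∈ Sset → y ∈ Sset → ∀ (f : x ⟶ y) (g g' : y ⟶ x⟦N⟧),
    pair x y f (g + g') = pair x y f g + pair x y f g'
  smul_left : ∀ x y, x ∈ Sset → y ∈ Sset → ∀ (a : k) (f : x ⟶ y) (g : y ⟶ x⟦N⟧),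
    pair x y (a • f) g = a * pair x y f g
  smul_right : ∀ x y, x ∈ Sset → y ∈ Sset → ∀ (a : k) (f : x ⟶ y) (g : y ⟶ x⟦N⟧),
    pair x y f (a • g) = a * pair x y f g
  assoc : ∀ x y z, x ∈ Sset → y ∈ Sset → z ∈ Sset →
    ∀ (f : x ⟶ y) (g : y ⟶ z) (h : z ⟶ x⟦N⟧),
    pair x z (f ≫ g) h = pair x y f (g ≫ h)
  nondeg_left : ∀ x y, x ∈ Sset → y ∈ Sset → ∀ f : x ⟶ y,
    (∀ g : y ⟶ x⟦N⟧, pair x y f g = 0) → f = 0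
  nondeg_right : ∀ x y, x ∈ Sset → y ∈ Sset → ∀ g : y ⟶ x⟦N⟧,
    (∀ f : x ⟶ y, pair x y f g = 0) → g = 0

end Tri

end Defs

variable {C : Type u} [Category.{v} C]

section MyHelpers

variable {C : Type u} [Category.{v} C] [Preadditive C] [HasFiniteBiproducts C]

lemma myInAdd_retract {t z z' : C} (h : inAdd t z) (i : z' ⟶ z) (r : z ⟶ z')
    (hir : i ≫ r = 𝟙 z') : inAdd t z' := by
  obtain ⟨n, i₀, r₀, h₀⟩ := h
  refine ⟨n, i ≫ i₀, r₀ ≫ r, ?_⟩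
  rw [Category.assoc, ← Category.assoc i₀ r₀ r, h₀, Category.id_comp, hir]

lemma myInAdd_iso {t z z' : C} (h : inAdd t z) (e : z' ≅ z) : inAdd t z' :=
  myInAdd_retract h e.hom e.inv e.hom_inv_id

lemma myInAdd_of_isZero {t z : C} (h : IsZero z) : inAdd t z :=
  ⟨0, 0, 0, h.eq_of_src _ _⟩

lemma myInAdd_self (t : C) : inAdd t t :=
  ⟨1, biproduct.ι (fun _ : Fin 1 => t) 0, biproduct.π (fun _ : Fin 1 => t) 0,
    biproduct.ι_π_self _ 0⟩

lemma myInAdd_biproductFin (t : C) (n : ℕ) : inAdd t (⨁ fun _ : Fin n => t) :=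
  ⟨n, 𝟙 _, 𝟙 _, Category.comp_id _⟩

lemma myInAdd_congr {t t' z : C} (h : inAdd t z) (e : t ≅ t') : inAdd t' z := by
  obtain ⟨n, i, r, hir⟩ := h
  refine ⟨n, i ≫ (biproduct.mapIso fun _ : Fin n => e).hom,
    (biproduct.mapIso fun _ : Fin n => e).inv ≫ r, ?_⟩
  rw [Category.assoc, Iso.hom_inv_id_assoc, hir]

lemma myInAdd_shift [HasShift C ℤ] [∀ n : ℤ, (shiftFunctor C n).Additive] {t z : C}
    (h : inAdd t z) (s : ℤ) : inAdd (t⟦s⟧) (z⟦s⟧) := by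
  obtain ⟨n, i, r, hir⟩ := h
  let F := shiftFunctor C s
  let e : F.obj (⨁ fun _ : Fin n => t) ≅ ⨁ fun _ : Fin n => F.obj t :=
    F.mapBiproduct (fun _ : Fin n => t)
  refine ⟨n, F.map i ≫ e.hom, e.inv ≫ F.map r, ?_⟩
  rw [Category.assoc, Iso.hom_inv_id_assoc, ← F.map_comp, hir, F.map_id]

lemma myInAdd_biproductBool {t : C} (fam : Bool → C) (h₁ : inAdd t (fam true))
    (h₂ : inAdd t (fam false)) : inAdd t (⨁ fam) := by
  obtain ⟨n₁, i₁, r₁, hir₁⟩ := h₁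
  obtain ⟨n₂, i₂, r₂, hir₂⟩ := h₂
  let tb : Fin (n₁ + n₂) → C := fun _ => t
  let ι1 : (⨁ fun _ : Fin n₁ => t) ⟶ ⨁ tb :=
    biproduct.desc fun j => biproduct.ι tb (Fin.castAdd n₂ j)
  let ι2 : (⨁ fun _ : Fin n₂ => t) ⟶ ⨁ tb :=
    biproduct.desc fun j => biproduct.ι tb (Fin.natAdd n₁ j)
  let π1 : (⨁ tb) ⟶ ⨁ fun _ : Fin n₁ => t :=
    biproduct.lift fun j => biproduct.π tb (Fin.castAdd n₂ j)
  let π2 : (⨁ tb) ⟶ ⨁ fun _ : Fin n₂ => t :=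
    biproduct.lift fun j => biproduct.π tb (Fin.natAdd n₁ j)
  have hcastinj : ∀ (j : Fin n₁) (j' : Fin n₁),
      Fin.castAdd n₂ j = Fin.castAdd n₂ j' ↔ j = j' := by
    intro j j'
    constructor
    · intro hh
      have := congrArg Fin.val hh
      simp only [Fin.coe_castAdd] at this
      exact Fin.ext this
    · intro hh; rw [hh]
  have hnatinj : ∀ (j : Fin n₂) (j' : Fin n₂),
      Fin.natAdd n₁ j = Fin.natAdd n₁ j' ↔ j = j' := by
    intro j j'
    constructor
    · intro hh
      have := congrArg Fin.val hh
      simp only [Fin.coe_natAdd] at this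
      exact Fin.ext (by omega)
    · intro hh; rw [hh]
  have hmix : ∀ (j : Fin n₁) (j' : Fin n₂), Fin.castAdd n₂ j ≠ Fin.natAdd n₁ j' := by
    intro j j' hh
    have := congrArg Fin.val hh
    simp only [Fin.coe_castAdd, Fin.coe_natAdd] at this
    omega
  have h11 : ι1 ≫ π1 = 𝟙 _ := by
    apply biproduct.hom_ext; intro j'
    apply biproduct.hom_ext'; intro j
    simp only [ι1, π1, Category.assoc, biproduct.lift_π, biproduct.ι_desc_assoc,
      biproduct.ι_π, Category.id_comp]
    by_cases hjj : j = j'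
    · subst hjj; simp; rfl
    · rw [dif_neg (fun hh => hjj ((hcastinj j j').mp hh)), dif_neg hjj]
  have h22 : ι2 ≫ π2 = 𝟙 _ := by
    apply biproduct.hom_ext; intro j'
    apply biproduct.hom_ext'; intro j
    simp only [ι2, π2, Category.assoc, biproduct.lift_π, biproduct.ι_desc_assoc,
      biproduct.ι_π, Category.id_comp]
    by_cases hjj : j = j'
    · subst hjj; simp; rfl
    · rw [dif_neg (fun hh => hjj ((hnatinj j j').mp hh)), dif_neg hjj]
  have h12 : ι1 ≫ π2 = 0 := by
    apply biproduct.hom_ext; intro j'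
    apply biproduct.hom_ext'; intro j
    simp only [ι1, π2, Category.assoc, biproduct.lift_π, biproduct.ι_desc_assoc,
      biproduct.ι_π, zero_comp, comp_zero]
    rw [dif_neg (hmix j j')]
  have h21 : ι2 ≫ π1 = 0 := by
    apply biproduct.hom_ext; intro j'
    apply biproduct.hom_ext'; intro j
    simp only [ι2, π1, Category.assoc, biproduct.lift_π, biproduct.ι_desc_assoc,
      biproduct.ι_π, zero_comp, comp_zero]
    rw [dif_neg (fun hh => hmix j' j hh.symm)]
  refine ⟨n₁ + n₂,
    biproduct.π fam true ≫ i₁ ≫ ι1 + biproduct.π fam false ≫ i₂ ≫ ι2,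
    π1 ≫ r₁ ≫ biproduct.ι fam true + π2 ≫ r₂ ≫ biproduct.ι fam false, ?_⟩
  rw [Preadditive.add_comp, Preadditive.comp_add, Preadditive.comp_add]
  have e11 : (biproduct.π fam true ≫ i₁ ≫ ι1) ≫ π1 ≫ r₁ ≫ biproduct.ι fam true =
      biproduct.π fam true ≫ biproduct.ι fam true := by
    rw [Category.assoc, Category.assoc, ← Category.assoc ι1 π1, h11, Category.id_comp,
      ← Category.assoc i₁ r₁, hir₁, Category.id_comp]
  have e12 : (biproduct.π fam true ≫ i₁ ≫ ι1) ≫ π2 ≫ r₂ ≫ biproduct.ι fam false = 0 := by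
    rw [Category.assoc, Category.assoc, ← Category.assoc ι1 π2, h12, zero_comp,
      comp_zero, comp_zero]
  have e21 : (biproduct.π fam false ≫ i₂ ≫ ι2) ≫ π1 ≫ r₁ ≫ biproduct.ι fam true = 0 := by
    rw [Category.assoc, Category.assoc, ← Category.assoc ι2 π1, h21, zero_comp,
      comp_zero, comp_zero]
  have e22 : (biproduct.π fam false ≫ i₂ ≫ ι2) ≫ π2 ≫ r₂ ≫ biproduct.ι fam false =
      biproduct.π fam false ≫ biproduct.ι fam false := by
    rw [Category.assoc, Category.assoc, ← Category.assoc ι2 π2, h22, Category.id_comp,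
      ← Category.assoc i₂ r₂, hir₂, Category.id_comp]
  rw [e11, e12, e21, e22, add_zero, zero_add, ← Fintype.sum_bool
    (fun b => biproduct.π fam b ≫ biproduct.ι fam b), biproduct.total]

lemma myInAdd_prodBool {t : C} (fam : Bool → C) (h₁ : inAdd t (fam true))
    (h₂ : inAdd t (fam false)) : inAdd t (∏ᶜ fam) :=
  myInAdd_iso (myInAdd_biproductBool fam h₁ h₂) (biproduct.isoProduct fam).symm

lemma myHomVanish [HasShift C ℤ] {t : C} (hvan : ∀ f : t ⟶ t⟦(1 : ℤ)⟧, f = 0)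
    {z : C} (hz : inAdd (t⟦(1 : ℤ)⟧) z) (g : t ⟶ z) : g = 0 := by
  obtain ⟨n, i, r, hir⟩ := hz
  have hgi : g ≫ i = 0 := by
    apply biproduct.hom_ext; intro j
    rw [Category.assoc, zero_comp]
    exact hvan _
  have : g = (g ≫ i) ≫ r := by rw [Category.assoc, hir, Category.comp_id]
  rw [this, hgi, zero_comp]

end MyHelpers

open ZeroObject in
theorem stmt3 (k : Type*) [Field k] [Preadditive C] [CategoryTheory.Linear k C] [HasZeroObject C]
    [HasShift C ℤ] [∀ n : ℤ, (shiftFunctor C n).Additive] [Pretriangulated C]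
    [HasFiniteBiproducts C] [IsIdempotentComplete C]
    [∀ X Y : C, FiniteDimensional k (X ⟶ Y)]
    (n : ℕ) (hn : 2 ≤ n) (t : C) (ht : IsClusterTiltingObj n t)
    (kk a : C) (hk : kk ∈ star {x : C | inAdd t x} {x : C | inAdd (t⟦(1 : ℤ)⟧) x}) (κ : kk ⟶ a) :
    ∃ (m : C) (σ : kk ⟶ m) (ι : m ⟶ a),
      m ∈ star {x : C | inAdd t x} {x : C | inAdd (t⟦(1 : ℤ)⟧) x} ∧ σ ≫ ι = κ ∧
      Function.Surjective (fun g : t ⟶ kk => g ≫ σ) ∧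
      Function.Injective (fun h : t ⟶ m => h ≫ ι) ∧
      Set.range (fun h : t ⟶ m => h ≫ ι) = Set.range (fun g : t ⟶ kk => g ≫ κ) := by
  classical
  have htt : inAdd t t := myInAdd_self t
  have hvan : ∀ f : t ⟶ t⟦(1 : ℤ)⟧, f = 0 := by
    have h0 := (IsClusterTiltingSub.mem_iff_ext₁ ht t).mp htt 1 le_rfl (by omega) t htt
    simpa using h0
  obtain ⟨x, y, f, g, h, hT₁, hx, hy⟩ := hk
  -- the kernel of `Hom(t, f ≫ κ)` and a presentation of it
  let φ : (t ⟶ x) →ₗ[k] (t ⟶ a) := Linear.rightComp k t (f ≫ κ)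
  let KS : Submodule k (t ⟶ x) := LinearMap.ker φ
  let rr : ℕ := Module.finrank k KS
  let bKS : Module.Basis (Fin rr) k KS := Module.finBasis k KS
  let x' : C := ⨁ fun _ : Fin rr => t
  let p : x' ⟶ x := biproduct.desc fun j => ((bKS j : KS) : t ⟶ x)
  have hKf : ∀ u : t ⟶ x, u ≫ (f ≫ κ) = 0 → ∃ l : t ⟶ x', l ≫ p = u := by
    intro u hu
    have huK : u ∈ KS := LinearMap.mem_ker.mpr hu
    refine ⟨∑ j, (bKS.repr ⟨u, huK⟩ j) • biproduct.ι (fun _ : Fin rr => t) j, ?_⟩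
    rw [Preadditive.sum_comp]
    have h2 := congrArg (Subtype.val) (bKS.sum_repr ⟨u, huK⟩)
    simp only [AddSubmonoidClass.coe_finset_sum, SetLike.val_smul] at h2
    simp only [Linear.smul_comp, p, biproduct.ι_desc]
    exact h2
  have hp0 : p ≫ (f ≫ κ) = 0 := by
    apply biproduct.hom_ext'; intro j
    rw [biproduct.ι_desc_assoc, comp_zero]
    exact LinearMap.mem_ker.mp (bKS j).2
  have hfac : ∀ (z : C), inAdd t z → ∀ w : z ⟶ x, w ≫ (f ≫ κ) = 0 →
      ∃ w' : z ⟶ x', w' ≫ p = w := by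
    rintro z ⟨s, iz, rz, hz⟩ w hw
    choose l hl using fun j : Fin s =>
      hKf (biproduct.ι (fun _ : Fin s => t) j ≫ rz ≫ w)
        (by rw [Category.assoc, Category.assoc, hw, comp_zero, comp_zero])
    refine ⟨iz ≫ biproduct.desc l, ?_⟩
    have hdp : biproduct.desc l ≫ p = rz ≫ w := by
      apply biproduct.hom_ext'; intro j
      rw [biproduct.ι_desc_assoc, hl j]
    rw [Category.assoc, hdp, ← Category.assoc, hz, Category.id_comp]
  -- the cone over `p`
  obtain ⟨m', q, r', hT₂⟩ := Pretriangulated.distinguished_cocone_triangle p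
  have hpq : p ≫ q = 0 := Pretriangulated.comp_distTriang_mor_zero₁₂ _ hT₂
  -- `ι₀ : m' ⟶ a` with `f ≫ κ = q ≫ ι₀`
  obtain ⟨ι₀', hι₀'⟩ := Pretriangulated.Triangle.yoneda_exact₂ _ hT₂ (f ≫ κ) hp0
  let ι₀ : m' ⟶ a := ι₀'
  have hι₀ : f ≫ κ = q ≫ ι₀ := hι₀'
  -- `σ₀ : kk ⟶ m'` with `q = f ≫ σ₀`
  have hT1inv := Pretriangulated.inv_rot_of_distTriang _ hT₁
  have hw0f : (Triangle.mk f g h).invRotate.mor₁ ≫ f = 0 :=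
    Pretriangulated.comp_distTriang_mor_zero₁₂ _ hT1inv
  have hyinv : inAdd t (y⟦(-1 : ℤ)⟧) := by
    have h1 := myInAdd_shift hy (-1 : ℤ)
    exact myInAdd_congr h1 ((shiftEquiv C (1 : ℤ)).unitIso.symm.app t)
  obtain ⟨w', hw'⟩ := hfac _ hyinv ((Triangle.mk f g h).invRotate.mor₁)
    ((Category.assoc _ _ _).symm.trans ((hw0f =≫ κ).trans zero_comp))
  have hw0q : (Triangle.mk f g h).invRotate.mor₁ ≫ q = 0 := by
    have := w' ≫= hpq; rw [comp_zero, ← Category.assoc, hw'] at this; exact this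
  obtain ⟨σ₀', hσ₀'⟩ := Pretriangulated.Triangle.yoneda_exact₂ _ hT1inv q hw0q
  let σ₀ : kk ⟶ m' := σ₀'
  have hσ₀ : q = f ≫ σ₀ := hσ₀'
  -- `v : y ⟶ a` with `σ₀ ≫ ι₀ - κ = g ≫ v`
  have hδ : f ≫ (σ₀ ≫ ι₀ - κ) = 0 := by
    rw [Preadditive.comp_sub, ← Category.assoc, ← hσ₀, ← hι₀, sub_self]
  obtain ⟨v', hv'⟩ := Pretriangulated.Triangle.yoneda_exact₂ _ hT₁ (σ₀ ≫ ι₀ - κ) hδ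
  let v : y ⟶ a := v'
  have hv : σ₀ ≫ ι₀ - κ = g ≫ v := hv'
  -- the direct sum triangle
  let Tfam : Bool → Pretriangulated.Triangle C := fun b =>
    Bool.rec (Triangle.mk (0 : (0 : C) ⟶ y) (𝟙 y) 0) ((Triangle.mk p q r').rotate) b
  have hTfam : ∀ b, Tfam b ∈ distTriang C := by
    intro b; cases b
    · exact Pretriangulated.contractible_distinguished₁ y
    · exact Pretriangulated.rot_of_distTriang _ hT₂
  have hPT := Pretriangulated.productTriangle_distinguished Tfam hTfam
  let fam₂ : Bool → C := fun b => (Tfam b).obj₂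
  let σm : kk ⟶ ∏ᶜ fam₂ :=
    Pi.lift (fun b => Bool.rec (motive := fun b => kk ⟶ fam₂ b) g σ₀ b)
  let dd : ∀ b, fam₂ b ⟶ a :=
    fun b => Bool.rec (motive := fun b => fam₂ b ⟶ a) (-v) ι₀ b
  let ιm : (∏ᶜ fam₂) ⟶ a := (biproduct.isoProduct fam₂).inv ≫ biproduct.desc dd
  -- component computations
  have hσmtrue : σm ≫ Pi.π fam₂ true = σ₀ := by simp [σm]; rfl
  have hσmfalse : σm ≫ Pi.π fam₂ false = g := by simp [σm]; rfl
  have hcomp : ∀ {c : C} (w : c ⟶ ∏ᶜ fam₂),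
      w ≫ ιm = (w ≫ Pi.π fam₂ true) ≫ ι₀ + (w ≫ Pi.π fam₂ false) ≫ (-v) := by
    intro c w
    have h1 : w ≫ (biproduct.isoProduct fam₂).inv =
        biproduct.lift fun b => w ≫ Pi.π fam₂ b := by
      rw [biproduct.isoProduct_inv]
      apply biproduct.hom_ext; intro b
      rw [Category.assoc, biproduct.lift_π, biproduct.lift_π]
    show w ≫ (biproduct.isoProduct fam₂).inv ≫ biproduct.desc dd = _
    rw [← Category.assoc, h1, biproduct.lift_desc, Fintype.sum_bool]
  -- vanishing of maps from t
  have hvy : ∀ w : t ⟶ y, w = 0 := fun w => myHomVanish hvan hy w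
  have hvx'1 : ∀ w : t ⟶ x'⟦(1 : ℤ)⟧, w = 0 :=
    fun w => myHomVanish hvan (myInAdd_shift (myInAdd_biproductFin t rr) 1) w
  -- factorization of maps `t ⟶ m'` through q
  have hfacq : ∀ w : t ⟶ m', ∃ u : t ⟶ x, w = u ≫ q := by
    intro w
    exact Pretriangulated.Triangle.coyoneda_exact₃ _ hT₂ w (hvx'1 _)
  -- the five statements
  have hfact : σm ≫ ιm = κ := by
    rw [hcomp σm, hσmtrue, hσmfalse]
    refine (?_ : σ₀ ≫ ι₀ + g ≫ (-v) = κ)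
    rw [Preadditive.comp_neg, ← hv]
    abel
  have hsurj : Function.Surjective (fun g0 : t ⟶ kk => g0 ≫ σm) := by
    intro hm
    obtain ⟨u₀, hu₀⟩ := hfacq (hm ≫ Pi.π fam₂ true)
    refine ⟨u₀ ≫ f, ?_⟩
    apply Pi.hom_ext; intro b
    cases b
    · show ((u₀ ≫ f) ≫ σm) ≫ Pi.π fam₂ false = hm ≫ Pi.π fam₂ false
      rw [Category.assoc, hσmfalse]
      exact (hvy ((u₀ ≫ f) ≫ g)).trans (hvy (hm ≫ Pi.π fam₂ false)).symm
    · show ((u₀ ≫ f) ≫ σm) ≫ Pi.π fam₂ true = hm ≫ Pi.π fam₂ true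
      rw [Category.assoc, hσmtrue]
      exact (Category.assoc _ _ _).trans ((u₀ ≫= hσ₀.symm).trans hu₀.symm)
  have hker : ∀ hm : t ⟶ ∏ᶜ fam₂, hm ≫ ιm = 0 → hm = 0 := by
    intro hm h0
    have hf0 : hm ≫ Pi.π fam₂ false = 0 := hvy _
    rw [hcomp hm, hf0] at h0
    erw [zero_comp, add_zero] at h0
    obtain ⟨u₀, hu₀⟩ := hfacq (hm ≫ Pi.π fam₂ true)
    have hu0k : u₀ ≫ (f ≫ κ) = 0 := by
      rw [hι₀, ← Category.assoc, ← hu₀]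
      exact h0
    obtain ⟨l, hl⟩ := hKf u₀ hu0k
    have ht0 : hm ≫ Pi.π fam₂ true = 0 := by
      exact hu₀.trans ((hl =≫ q).symm.trans ((Category.assoc _ _ _).trans ((l ≫= hpq).trans comp_zero)))
    apply Pi.hom_ext; intro b
    cases b
    · rw [zero_comp, hf0]
    · rw [zero_comp, ht0]
  have hinj : Function.Injective (fun h0 : t ⟶ ∏ᶜ fam₂ => h0 ≫ ιm) := by
    intro a₁ a₂ h12
    have h12' : a₁ ≫ ιm = a₂ ≫ ιm := h12
    have := hker (a₁ - a₂) (by rw [Preadditive.sub_comp, h12', sub_self])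
    exact sub_eq_zero.mp this
  have hrange : Set.range (fun h0 : t ⟶ ∏ᶜ fam₂ => h0 ≫ ιm) =
      Set.range (fun g0 : t ⟶ kk => g0 ≫ κ) := by
    ext w
    simp only [Set.mem_range]
    constructor
    · rintro ⟨hm, rfl⟩
      obtain ⟨g0, hg0⟩ := hsurj hm
      refine ⟨g0, ?_⟩
      have hg0' : g0 ≫ σm = hm := hg0
      rw [← hg0', Category.assoc, hfact]
    · rintro ⟨g0, rfl⟩
      exact ⟨g0 ≫ σm, by rw [Category.assoc, hfact]⟩
  have hmem : (∏ᶜ fam₂) ∈ star {x : C | inAdd t x} {x : C | inAdd (t⟦(1 : ℤ)⟧) x} := by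
    refine ⟨∏ᶜ fun b => (Tfam b).obj₁, ∏ᶜ fun b => (Tfam b).obj₃,
      (productTriangle Tfam).mor₁, (productTriangle Tfam).mor₂,
      (productTriangle Tfam).mor₃, hPT, ?_, ?_⟩
    · exact myInAdd_prodBool (fun b => (Tfam b).obj₁) hx (myInAdd_of_isZero (isZero_zero C))
    · exact myInAdd_prodBool (fun b => (Tfam b).obj₃)
        (myInAdd_shift (myInAdd_biproductFin t rr) 1) hy
  exact ⟨∏ᶜ fam₂, σm, ιm, hmem, hfact, hsurj, hinj, hrange⟩
end

section
/- With C, t, T, index_T as above: if t' ∈ T and 0 ≤ ℓ ≤ n−1, then index_T(Σ^ℓ t') = (−1)^ℓ [t'] in K_0^{sp}(T). -/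
open CategoryTheory Category Limits Pretriangulated Opposite

universe v u

section Helpers

variable {C : Type u} [Category.{v} C]

lemma inAdd_of_iso [Preadditive C] [HasFiniteBiproducts C] {t x y : C} (e : x ≅ y)
    (h : inAdd t x) : inAdd t y := by
  obtain ⟨m, i, r, hir⟩ := h
  exact ⟨m, e.inv ≫ i, r ≫ e.hom, by
    rw [Category.assoc, ← Category.assoc i, hir, Category.id_comp, e.inv_hom_id]⟩

lemma inAdd_of_isZero [Preadditive C] [HasFiniteBiproducts C] {t x : C} (h : IsZero x) :
    inAdd t x :=
  ⟨0, 0, 0, by rw [zero_comp, ← h.eq_of_src (𝟙 x) 0]⟩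

lemma cls_of_isZero [Preadditive C] [HasZeroObject C] [HasShift C ℤ]
    [∀ n : ℤ, (shiftFunctor C n).Additive] [Pretriangulated C]
    [HasFiniteBiproducts C] {t : C} {G : Type*}
    [AddCommGroup G] {cls : C → G} (hcls : IsAddOn {x : C | inAdd t x} cls)
    {z : C} (hz : IsZero z) : cls z = 0 := by
  haveI : HasBinaryBiproducts C := hasBinaryBiproducts_of_finite_biproducts C
  have hzz : IsZero (z ⊞ z) := by
    rw [IsZero.iff_id_eq_zero]
    rw [← biprod.total]
    have : (𝟙 z : z ⟶ z) = 0 := hz.eq_of_src _ _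
    rw [show (biprod.fst : z ⊞ z ⟶ z) ≫ biprod.inl = biprod.fst ≫ 𝟙 z ≫ biprod.inl by
        rw [Category.id_comp],
      show (biprod.snd : z ⊞ z ⟶ z) ≫ biprod.inr = biprod.snd ≫ 𝟙 z ≫ biprod.inr by
        rw [Category.id_comp], this]
    simp
  have h1 : cls z = cls (z ⊞ z) :=
    hcls.1 z (z ⊞ z) (inAdd_of_isZero hz) (inAdd_of_isZero hzz) ⟨hz.iso hzz⟩
  have h2 : cls (z ⊞ z) = cls z + cls z :=
    hcls.2 z z (inAdd_of_isZero hz) (inAdd_of_isZero hz)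
  exact left_eq_add.mp (h1.trans h2)

lemma isZero_src_of_cover_zero [Preadditive C] {Tset : Set C} {x c : C} {f : x ⟶ c}
    (hf : IsTCover Tset f) (h0 : f = 0) : IsZero x := by
  have := hf.2.2 0 (by rw [zero_comp, h0])
  rw [IsZero.iff_id_eq_zero, ← IsIso.hom_inv_id (0 : x ⟶ x), zero_comp]

lemma isIso_cover_of_mem [Preadditive C] {Tset : Set C} {x c : C} {f : x ⟶ c}
    (hf : IsTCover Tset f) (hc : c ∈ Tset) : IsIso f := by
  obtain ⟨h, hh⟩ := hf.2.1 c hc (𝟙 c)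
  have hiso : IsIso (f ≫ h) := hf.2.2 (f ≫ h) (by rw [Category.assoc, hh, Category.comp_id])
  have hid : f ≫ h = 𝟙 x := by
    have hepi : Epi (f ≫ h) := inferInstance
    have : (f ≫ h) ≫ (f ≫ h) = (f ≫ h) ≫ 𝟙 x := by
      rw [Category.comp_id, Category.assoc, ← Category.assoc h, hh, Category.id_comp]
    exact hepi.left_cancellation _ _ this
  exact ⟨h, hid, hh⟩

end Helpers

variable {C : Type u} [Category.{v} C]

theorem stmt6 (k : Type*) [Field k] [Preadditive C] [CategoryTheory.Linear k C] [HasZeroObject C]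
    [HasShift C ℤ] [∀ n : ℤ, (shiftFunctor C n).Additive] [Pretriangulated C]
    [HasFiniteBiproducts C] [IsIdempotentComplete C]
    [∀ X Y : C, FiniteDimensional k (X ⟶ Y)]
    (n : ℕ) (hn : 2 ≤ n) (t : C) (ht : IsClusterTiltingObj n t)
    {G : Type*} [AddCommGroup G] (cls ind : C → G)
    (hcls : IsAddOn {x : C | inAdd t x} cls)
    (hind : IsIndex n {x : C | inAdd t x} cls ind)
    (t' : C) (ht' : inAdd t t') (ℓ : ℕ) (hℓ : ℓ ≤ n - 1) :
    ind (t'⟦(ℓ : ℤ)⟧) = ((-1 : ℤ) ^ ℓ) • cls t' := by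
  classical
  set Tset : Set C := {x : C | inAdd t x} with hTset
  -- Hom vanishing : maps from Tset to t'⟦m⟧ vanish for 1 ≤ m ≤ n-1
  have hvanish : ∀ (m : ℕ), 1 ≤ m → m ≤ n - 1 → ∀ x ∈ Tset,
      ∀ f : x ⟶ t'⟦(m : ℤ)⟧, f = 0 := by
    intro m hm1 hm2 x hx f
    exact (ht.mem_iff_ext₁ t').mp ht' m hm1 hm2 x hx f
  obtain ⟨cobj, tw, hc0, hcov, hcn, hsum⟩ := hind (t'⟦(ℓ : ℤ)⟧)
  -- key induction on the tower
  have key : ∀ i ≤ n - 1,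
      (i ≤ ℓ → Nonempty (tw.w i ≅ t'⟦((ℓ - i : ℕ) : ℤ)⟧)) ∧ (ℓ < i → IsZero (tw.w i)) := by
    intro i
    induction i with
    | zero =>
      intro _
      refine ⟨fun _ => ⟨eqToIso (by rw [tw.w_zero, hc0, Nat.sub_zero])⟩, fun h => absurd h (by omega)⟩
    | succ i ih =>
      intro hi1
      obtain ⟨ih1, ih2⟩ := ih (by omega)
      have htri := tw.mem i (by omega)
      have hcovi := hcov i (by omega)
      rcases lt_trichotomy i ℓ with hil | hil | hil
      · -- i < ℓ : middle object is zero, hmor is iso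
        obtain ⟨e⟩ := ih1 (by omega)
        have hg0 : tw.gmor i = 0 := by
          have := hvanish (ℓ - i) (by omega) (by omega) (cobj (i + 1)) hcovi.1
            (tw.gmor i ≫ e.hom)
          rw [← Category.comp_id (tw.gmor i), ← e.hom_inv_id, ← Category.assoc, this,
            zero_comp]
        have hz2 : IsZero (cobj (i + 1)) := isZero_src_of_cover_zero hcovi hg0
        have hiso3 : IsIso (tw.hmor i) :=
          (Triangle.isZero₂_iff_isIso₃ (Triangle.mk (tw.fmor i) (tw.gmor i) (tw.hmor i))
            htri).mp hz2
        have e1 : (tw.w (i + 1))⟦(1 : ℤ)⟧ ≅ (t'⟦((ℓ - (i + 1) : ℕ) : ℤ)⟧)⟦(1 : ℤ)⟧ :=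
          (asIso (tw.hmor i)).symm ≪≫ e ≪≫
            (shiftFunctorAdd' C ((ℓ - (i + 1) : ℕ) : ℤ) (1 : ℤ) ((ℓ - i : ℕ) : ℤ)
              (by omega)).app t'
        refine ⟨fun _ => ⟨(shiftFunctor C (1 : ℤ)).preimageIso e1⟩, fun h => absurd h (by omega)⟩
      · -- i = ℓ : cover of an object of Tset is an iso; w (i+1) is zero
        subst hil
        obtain ⟨e⟩ := ih1 le_rfl
        have hwi : tw.w i ∈ Tset := by
          refine inAdd_of_iso ?_ ht'
          refine Iso.symm (e ≪≫ ?_)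
          have : ((i - i : ℕ) : ℤ) = (0 : ℤ) := by omega
          exact (shiftFunctorZero' C ((i - i : ℕ) : ℤ) this).app t'
        have : IsIso (tw.gmor i) := isIso_cover_of_mem hcovi hwi
        have hz1 : IsZero (tw.w (i + 1)) :=
          Triangle.isZero₁_of_isIso₂ (Triangle.mk (tw.fmor i) (tw.gmor i) (tw.hmor i)) htri this
        exact ⟨fun h => absurd h (by omega), fun _ => hz1⟩
      · -- ℓ < i : everything zero
        have hwz : IsZero (tw.w i) := ih2 hil
        have hg0 : tw.gmor i = 0 := hwz.eq_of_tgt _ _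
        have hz2 : IsZero (cobj (i + 1)) := isZero_src_of_cover_zero hcovi hg0
        have hz1 : IsZero (tw.w (i + 1)) :=
          Triangle.isZero₁_of_isZero₂₃ (Triangle.mk (tw.fmor i) (tw.gmor i) (tw.hmor i))
            htri hz2 hwz
        exact ⟨fun h => absurd h (by omega), fun _ => hz1⟩
  -- properties of cobj (i+1) for i < n - 1
  have hcobj : ∀ i < n - 1,
      (i = ℓ → Nonempty (cobj (i + 1) ≅ t')) ∧ (i ≠ ℓ → IsZero (cobj (i + 1))) := by
    intro i hi
    have hcovi := hcov i hi
    obtain ⟨k1, k2⟩ := key i (by omega)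
    constructor
    · rintro rfl
      obtain ⟨e⟩ := k1 le_rfl
      have e0 : tw.w i ≅ t' := e ≪≫ (shiftFunctorZero' C ((i - i : ℕ) : ℤ) (by omega)).app t'
      have hwi : tw.w i ∈ Tset := inAdd_of_iso e0.symm ht'
      have : IsIso (tw.gmor i) := isIso_cover_of_mem hcovi hwi
      exact ⟨asIso (tw.gmor i) ≪≫ e0⟩
    · intro hne
      rcases lt_or_gt_of_ne hne with hil | hil
      · obtain ⟨e⟩ := k1 (by omega)
        have hg0 : tw.gmor i = 0 := by
          have := hvanish (ℓ - i) (by omega) (by omega) (cobj (i + 1)) hcovi.1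
            (tw.gmor i ≫ e.hom)
          rw [← Category.comp_id (tw.gmor i), ← e.hom_inv_id, ← Category.assoc, this,
            zero_comp]
        exact isZero_src_of_cover_zero hcovi hg0
      · have hwz : IsZero (tw.w i) := k2 hil
        exact isZero_src_of_cover_zero hcovi (hwz.eq_of_tgt _ _)
  -- the top object cobj n
  have htop : tw.w (n - 1) = cobj n := tw.w_top.trans (congrArg cobj (by omega))
  have hcobjn : (n - 1 = ℓ → Nonempty (cobj n ≅ t')) ∧ (n - 1 ≠ ℓ → IsZero (cobj n)) := by
    obtain ⟨k1, k2⟩ := key (n - 1) le_rfl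
    constructor
    · intro hel
      obtain ⟨e⟩ := k1 (by omega)
      exact ⟨eqToIso htop.symm ≪≫ e ≪≫
        (shiftFunctorZero' C ((ℓ - (n - 1) : ℕ) : ℤ) (by omega)).app t'⟩
    · intro hne
      have : ℓ < n - 1 := by omega
      exact htop ▸ k2 this
  -- membership of cobj (i+1) in Tset for i < n
  have hmem : ∀ i < n, cobj (i + 1) ∈ Tset := by
    intro i hi
    rcases lt_or_ge i (n - 1) with h | h
    · exact (hcov i h).1
    · have : i + 1 = n := by omega
      rw [this]; exact hcn
  -- compute the sum
  rw [hsum, Finset.sum_eq_single_of_mem ℓ (Finset.mem_range.mpr (by omega))]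
  · have hclseq : cls (cobj (ℓ + 1)) = cls t' := by
      have hmemℓ : cobj (ℓ + 1) ∈ Tset := hmem ℓ (by omega)
      rcases lt_or_ge ℓ (n - 1) with h | h
      · exact hcls.1 _ _ hmemℓ ht' ((hcobj ℓ h).1 rfl)
      · have : n - 1 = ℓ := by omega
        obtain ⟨e⟩ := hcobjn.1 this
        have : ℓ + 1 = n := by omega
        exact hcls.1 _ _ hmemℓ ht' ⟨eqToIso (congrArg cobj this) ≪≫ e⟩
    rw [hclseq]
  · intro b hb hbne
    have hz : IsZero (cobj (b + 1)) := by
      rcases lt_or_ge b (n - 1) with h | h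
      · exact (hcobj b h).2 hbne
      · have hb' : b + 1 = n := by
          have := Finset.mem_range.mp hb; omega
        rw [hb']
        exact hcobjn.2 (by omega)
    rw [cls_of_isZero hcls hz, smul_zero]
end
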